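/- Let X and X' be path-connected topological spaces. For any continuous maps f₁, …, f_k : X → X', the higher homotopic distance satisfies D(f₁, …, f_k) ≤ cat(X), where cat(X) is the Lusternik–Schnirelmann category of X. -/

import Mathlib

/-- The (higher) homotopic distance of a family of continuous maps `f i : X → Y`:
the least `l` such that `X` admits an open cover by `l` open sets on each of which
all the maps restrict to pairwise homotopic maps (`∞` if no such cover exists). -/
noncomputable def homDist {X Y : Type*} [TopologicalSpace X] [TopologicalSpace Y]
    {k : ℕ} (f : Fin k → C(X, Y)) : ℕ∞ :=
  sInf ((fun n : ℕ => (n : ℕ∞)) '' {n : ℕ | ∃ U : Fin n → Set X,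
    (∀ j, IsOpen (U j)) ∧ (⋃ j, U j) = Set.univ ∧
    ∀ j i i', ((f i).restrict (U j)).Homotopic ((f i').restrict (U j))})

/-- Homotopic distance of two maps. -/
noncomputable def homDist2 {X Y : Type*} [TopologicalSpace X] [TopologicalSpace Y]
    (f g : C(X, Y)) : ℕ∞ :=
  homDist ![f, g]

/-- The Lusternik–Schnirelmann category of `X`: the least `m` such that `X` admits an open
cover by `m` sets, each of whose inclusion into `X` is nullhomotopic. -/
noncomputable def lsCat (X : Type*) [TopologicalSpace X] : ℕ∞ :=
  sInf ((fun n : ℕ => (n : ℕ∞)) '' {m : ℕ | ∃ U : Fin m → Set X,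
    (∀ j, IsOpen (U j)) ∧ (⋃ j, U j) = Set.univ ∧
    ∀ j, ∃ c : X, ((ContinuousMap.id X).restrict (U j)).Homotopic
      (ContinuousMap.const _ c)})

theorem homDist_le_lsCat {X X' : Type*} [TopologicalSpace X] [TopologicalSpace X']
    [PathConnectedSpace X] [PathConnectedSpace X'] {k : ℕ} (f : Fin k → C(X, X')) :
    homDist f ≤ lsCat X := by
  apply sInf_le_sInf
  rintro _ ⟨n, ⟨U, hopen, hcov, hnull⟩, rfl⟩
  refine ⟨n, ⟨U, hopen, hcov, fun j i i' => ?_⟩, rfl⟩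
  obtain ⟨c, hc⟩ := hnull j
  have key : ∀ i : Fin k, ((f i).restrict (U j)).Homotopic
      (ContinuousMap.const _ (f i c)) := fun i => by
    have h1 : (f i).restrict (U j) = (f i).comp ((ContinuousMap.id X).restrict (U j)) := by
      ext x; rfl
    have h2 : (f i).comp (ContinuousMap.const (U j) c) = ContinuousMap.const (U j) (f i c) := by
      ext x; rfl
    rw [h1, ← h2]
    exact (ContinuousMap.Homotopic.refl (f i)).comp hc
  refine (key i).trans (ContinuousMap.Homotopic.trans ?_ (key i').symm)
  exact ⟨(PathConnectedSpace.somePath (f i c) (f i' c)).toHomotopyConst⟩
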